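/- Let (M, ρ) be a pseudometric space, X a Banach space, and F : M → 𝒦₁(X) a map into nonempty compact convex subsets of X of dimension at most 1 (points and closed segments). Let λ > 0 and suppose that for every subset M' ⊆ M with at most 4 points, F restricted to M' has a selection f' (f'(x) ∈ F(x) on M') with ‖f'(x) − f'(y)‖ ≤ λ·ρ(x,y) on M'. Then F has a selection f : M → X with ‖f(x) − f(y)‖ ≤ 15λ·ρ(x,y) for all x, y ∈ M. -/

import Mathlib

open Set Metric
namespace LsegAux

section Generic
variable {X : Type*} [NormedAddCommGroup X] [NormedSpace ℝ X]
noncomputable def sg (a b : X) (t : ℝ) : X := a + t • (b - a)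

lemma sg_sub (a b : X) (s t : ℝ) : sg a b s - sg a b t = (s - t) • (b - a) := by
  simp only [sg]; module

lemma norm_sg_sub (a b : X) (s t : ℝ) : ‖sg a b s - sg a b t‖ = |s - t| * ‖b - a‖ := by
  rw [sg_sub, norm_smul, Real.norm_eq_abs]

/-- Infinite Helly's theorem on the real line. -/
lemma real_helly {ι : Type*} [Nonempty ι] (S : ι → Set ℝ)
    (hsub : ∀ i, S i ⊆ Icc (0:ℝ) 1) (hcl : ∀ i, IsClosed (S i))
    (hcv : ∀ i, Convex ℝ (S i)) (hpair : ∀ i j, (S i ∩ S j).Nonempty) :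
    (⋂ i, S i).Nonempty := by
  have hne : ∀ i, (S i).Nonempty := fun i => ((hpair i i).mono (inter_subset_left)).mono le_rfl
  have hbdb : ∀ i, BddBelow (S i) := fun i => (bddBelow_Icc).mono (hsub i)
  have hbda : ∀ i, BddAbove (S i) := fun i => (bddAbove_Icc).mono (hsub i)
  have hminf : ∀ i, sInf (S i) ∈ S i := fun i => (hcl i).csInf_mem (hne i) (hbdb i)
  have hmsup : ∀ i, sSup (S i) ∈ S i := fun i => (hcl i).csSup_mem (hne i) (hbda i)
  have hub : BddAbove (range fun i => sInf (S i)) := by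
    refine ⟨1, ?_⟩
    rintro _ ⟨i, rfl⟩
    exact (hsub i (hminf i)).2
  set t : ℝ := ⨆ i, sInf (S i) with ht
  refine ⟨t, mem_iInter.2 fun i => ?_⟩
  have h1 : sInf (S i) ≤ t := le_ciSup hub i
  have h2 : t ≤ sSup (S i) := by
    refine ciSup_le fun j => ?_
    obtain ⟨c, hcj, hci⟩ := hpair j i
    exact le_trans (csInf_le (hbdb j) hcj) (le_csSup (hbda i) hci)
  exact ((hcv i).ordConnected).out (hminf i) (hmsup i) ⟨h1, h2⟩

/-- a finset of at most 3 elements is covered by three elements -/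
lemma exists_three_cover {α : Type*} [Nonempty α] (I : Finset α) (hI : I.card ≤ 3) :
    ∃ i j k : α, ∀ a ∈ I, a = i ∨ a = j ∨ a = k := by
  classical
  obtain ⟨d⟩ := (inferInstance : Nonempty α)
  have hlen : I.toList.length ≤ 3 := by rw [Finset.length_toList]; exact hI
  have hmem : ∀ a, a ∈ I → a ∈ I.toList := fun a ha => (Finset.mem_toList).2 ha
  rcases hl : I.toList with _ | ⟨i, _ | ⟨j, _ | ⟨k, _ | ⟨m, l⟩⟩⟩⟩
  · exact ⟨d, d, d, fun a ha => by simpa [hl] using hmem a ha⟩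
  · exact ⟨i, i, i, fun a ha => by simpa [hl] using hmem a ha⟩
  · refine ⟨i, j, j, fun a ha => ?_⟩
    have := hmem a ha; rw [hl] at this; simpa using this
  · refine ⟨i, j, k, fun a ha => ?_⟩
    have := hmem a ha; rw [hl] at this; simpa using this
  · rw [hl] at hlen; simp at hlen; omega

/-- Among three reals, one lies between the other two. -/
lemma three_order (a b c : ℝ) : a ∈ uIcc b c ∨ b ∈ uIcc a c ∨ c ∈ uIcc a b := by
  rcases le_total a b with h1 | h1 <;> rcases le_total b c with h2 | h2 <;>
    rcases le_total a c with h3 | h3 <;>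
    simp [Set.mem_uIcc] <;> tauto
lemma sg_comb (a b : X) (s t θ : ℝ) :
    sg a b ((1 - θ) * s + θ * t) = (1 - θ) • sg a b s + θ • sg a b t := by
  simp only [sg]; module
lemma sg_continuous (a b : X) : Continuous (sg a b) := by
  unfold sg; exact continuous_const.add (continuous_id.smul continuous_const)
lemma segment_eq_sg (a b : X) : segment ℝ a b = sg a b '' Icc (0:ℝ) 1 := by
  rw [segment_eq_image']; rfl

/-- convexity of infDist along a parametrized segment -/
lemma infDist_comb {C : Set X} (hC : Convex ℝ C) (hne : C.Nonempty) (p q : X) {θ : ℝ}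
    (h0 : 0 ≤ θ) (h1 : θ ≤ 1) :
    infDist ((1 - θ) • p + θ • q) C ≤ (1 - θ) * infDist p C + θ * infDist q C := by
  refine le_of_forall_pos_le_add fun ε hε => ?_
  obtain ⟨cp, hcp, hcp'⟩ := (infDist_lt_iff hne).1
    (lt_add_of_pos_right (infDist p C) (half_pos hε) : infDist p C < infDist p C + ε/2)
  obtain ⟨cq, hcq, hcq'⟩ := (infDist_lt_iff hne).1
    (lt_add_of_pos_right (infDist q C) (half_pos hε) : infDist q C < infDist q C + ε/2)
  have hmem : (1 - θ) • cp + θ • cq ∈ C := hC hcp hcq (by linarith) h0 (by ring)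
  have hd : dist ((1 - θ) • p + θ • q) ((1 - θ) • cp + θ • cq)
      ≤ (1 - θ) * dist p cp + θ * dist q cq := by
    rw [dist_eq_norm, dist_eq_norm, dist_eq_norm]
    have : (1 - θ) • p + θ • q - ((1 - θ) • cp + θ • cq)
        = (1 - θ) • (p - cp) + θ • (q - cq) := by module
    rw [this]
    refine (norm_add_le _ _).trans ?_
    rw [norm_smul, norm_smul, Real.norm_eq_abs, Real.norm_eq_abs,
      abs_of_nonneg (by linarith : (0:ℝ) ≤ 1 - θ), abs_of_nonneg h0]
  calc infDist ((1 - θ) • p + θ • q) C ≤ dist ((1 - θ) • p + θ • q) ((1 - θ) • cp + θ • cq) :=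
        infDist_le_dist_of_mem hmem
    _ ≤ (1 - θ) * dist p cp + θ * dist q cq := hd
    _ ≤ (1 - θ) * (infDist p C + ε/2) + θ * (infDist q C + ε/2) := by
        have := hcp'.le; have := hcq'.le
        have h2 : (0:ℝ) ≤ 1 - θ := by linarith
        nlinarith
    _ ≤ (1 - θ) * infDist p C + θ * infDist q C + ε := by nlinarith

lemma infDist_sg_comb {C : Set X} (hC : Convex ℝ C) (hne : C.Nonempty) (a b : X) {s t θ : ℝ}
    (h0 : 0 ≤ θ) (h1 : θ ≤ 1) :
    infDist (sg a b ((1 - θ) * s + θ * t)) C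
      ≤ (1 - θ) * infDist (sg a b s) C + θ * infDist (sg a b t) C := by
  rw [sg_comb]; exact infDist_comb hC hne _ _ h0 h1

/-- parametrize a point of an unordered interval -/
lemma exists_comb_of_mem_uIcc {s t u : ℝ} (h : u ∈ uIcc s t) :
    ∃ θ : ℝ, 0 ≤ θ ∧ θ ≤ 1 ∧ u = (1 - θ) * s + θ * t := by
  rcases eq_or_ne s t with rfl | hst
  · refine ⟨0, le_rfl, zero_le_one, ?_⟩
    have hu : u = s := by simpa [uIcc_self] using h
    rw [hu]; ring
  · have hts : t - s ≠ 0 := sub_ne_zero.2 (Ne.symm hst)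
    refine ⟨(u - s) / (t - s), ?_, ?_, ?_⟩
    · rcases le_total s t with hle | hle
      · rw [uIcc_of_le hle] at h
        exact div_nonneg (by linarith [h.1]) (by linarith)
      · rw [uIcc_of_ge hle] at h
        have h1 : t - s < 0 := lt_of_le_of_ne (by linarith) hts
        exact div_nonneg_iff.2 (Or.inr ⟨by linarith [h.2], h1.le⟩)
    · rcases le_total s t with hle | hle
      · rw [uIcc_of_le hle] at h
        have h1 : 0 < t - s := lt_of_le_of_ne (by linarith) (Ne.symm hts)
        rw [div_le_one h1]; linarith [h.2]
      · rw [uIcc_of_ge hle] at h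
        have h1 : t - s < 0 := lt_of_le_of_ne (by linarith) hts
        rw [div_le_one_of_neg h1]; linarith [h.1]
    · have hc : (u - s) / (t - s) * (t - s) = u - s := div_mul_cancel₀ _ hts
      nlinarith [hc]

lemma infDist_sg_le_max {C : Set X} (hC : Convex ℝ C) (hne : C.Nonempty) (a b : X) {s t u : ℝ}
    (h : u ∈ uIcc s t) :
    infDist (sg a b u) C ≤ max (infDist (sg a b s) C) (infDist (sg a b t) C) := by
  obtain ⟨θ, h0, h1, rfl⟩ := exists_comb_of_mem_uIcc h
  refine (infDist_sg_comb hC hne a b h0 h1).trans ?_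
  have l1 : infDist (sg a b s) C ≤ max (infDist (sg a b s) C) (infDist (sg a b t) C) :=
    le_max_left _ _
  have l2 : infDist (sg a b t) C ≤ max (infDist (sg a b s) C) (infDist (sg a b t) C) :=
    le_max_right _ _
  nlinarith

/-- value of a continuous linear functional along a parametrized segment lies between
its values at the endpoints -/
lemma phi_sg_mem_uIcc (φ : X →L[ℝ] ℝ) (a b : X) {s t u : ℝ} (h : u ∈ uIcc s t) :
    φ (sg a b u) ∈ uIcc (φ (sg a b s)) (φ (sg a b t)) := by
  obtain ⟨θ, h0, h1, rfl⟩ := exists_comb_of_mem_uIcc h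
  rw [sg_comb, map_add, map_smul, map_smul]
  rcases le_total (φ (sg a b s)) (φ (sg a b t)) with hle | hle <;>
    [rw [uIcc_of_le hle]; rw [uIcc_of_ge hle]] <;>
    constructor <;> simp only [smul_eq_mul] <;> nlinarith


end Generic

/-- Bundled configuration for the proof of the finiteness principle. -/
structure Cfg (M : Type*) (X : Type*) [NormedAddCommGroup X] [NormedSpace ℝ X] where
  ρ : M → M → ℝ
  lam : ℝ
  F : M → Set X
  A : M → X
  B : M → X
  hlam : 0 < lam
  hρself : ∀ x, ρ x x = 0
  hρsymm : ∀ x y, ρ x y = ρ y x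
  hρtri : ∀ x y z, ρ x y ≤ ρ x z + ρ z y
  hFAB : ∀ x, F x = segment ℝ (A x) (B x)
  hfin : ∀ M' : Finset M, M'.card ≤ 4 →
      ∃ f' : M → X, (∀ x ∈ M', f' x ∈ F x) ∧
        ∀ x ∈ M', ∀ y ∈ M', ‖f' x - f' y‖ ≤ lam * ρ x y

namespace Cfg

variable {M : Type*} {X : Type*} [NormedAddCommGroup X] [NormedSpace ℝ X] (c : Cfg M X)

lemma ρ_nonneg (x y : M) : 0 ≤ c.ρ x y := by
  have h := c.hρtri x x y
  rw [c.hρself, c.hρsymm y x] at h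
  linarith

lemma r_nonneg (x y : M) : 0 ≤ c.lam * c.ρ x y :=
  mul_nonneg c.hlam.le (c.ρ_nonneg x y)

/-- the parametrization of the segment `F x` -/
noncomputable def γ (x : M) (t : ℝ) : X := sg (c.A x) (c.B x) t

lemma F_eq (x : M) : c.F x = c.γ x '' Icc (0:ℝ) 1 := by
  rw [c.hFAB x, segment_eq_sg]; rfl

lemma F_nonempty (x : M) : (c.F x).Nonempty := by
  rw [c.F_eq]; exact ⟨_, mem_image_of_mem _ (left_mem_Icc.2 zero_le_one)⟩

lemma F_convex (x : M) : Convex ℝ (c.F x) := by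
  rw [c.hFAB x]; exact convex_segment _ _

lemma F_compact (x : M) : IsCompact (c.F x) := by
  rw [c.F_eq]; exact (isCompact_Icc).image (sg_continuous _ _)

lemma exists_param {x : M} {p : X} (hp : p ∈ c.F x) : ∃ t ∈ Icc (0:ℝ) 1, c.γ x t = p := by
  rw [c.F_eq] at hp; obtain ⟨t, ht, rfl⟩ := hp; exact ⟨t, ht, rfl⟩

/-- the four-point hypothesis, in a convenient form (repetitions allowed). -/
lemma sel (x y z w : M) : ∃ f : M → X,
    (∀ u, u = x ∨ u = y ∨ u = z ∨ u = w → f u ∈ c.F u) ∧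
    (∀ u v, (u = x ∨ u = y ∨ u = z ∨ u = w) → (v = x ∨ v = y ∨ v = z ∨ v = w) →
      ‖f u - f v‖ ≤ c.lam * c.ρ u v) := by
  classical
  obtain ⟨f, hmem, hlip⟩ := c.hfin {x, y, z, w} (by
    refine le_trans (Finset.card_insert_le _ _) ?_
    refine Nat.add_le_add_right (le_trans (Finset.card_insert_le _ _) ?_) 1
    refine Nat.add_le_add_right (le_trans (Finset.card_insert_le _ _) ?_) 1
    simpa using le_refl 1)
  have hm : ∀ u : M, (u = x ∨ u = y ∨ u = z ∨ u = w) → u ∈ ({x, y, z, w} : Finset M) := by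
    intro u hu
    simp only [Finset.mem_insert, Finset.mem_singleton]
    exact hu
  exact ⟨f, fun u hu => hmem u (hm u hu), fun u v hu hv => hlip u (hm u hu) v (hm v hv)⟩


/-- the first refinement, at the level of parameters -/
def S1 (x y : M) : Set ℝ :=
  {t | t ∈ Icc (0:ℝ) 1 ∧ infDist (c.γ x t) (c.F y) ≤ c.lam * c.ρ x y}

def T1 (x : M) : Set ℝ := ⋂ y, c.S1 x y

/-- the first refinement -/
def F1 (x : M) : Set X := c.γ x '' c.T1 x

lemma S1_subset (x y : M) : c.S1 x y ⊆ Icc (0:ℝ) 1 := fun _ h => h.1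

lemma S1_closed (x y : M) : IsClosed (c.S1 x y) := by
  refine IsClosed.inter isClosed_Icc ?_
  exact isClosed_le ((continuous_infDist_pt _).comp (sg_continuous _ _)) continuous_const

lemma S1_convex (x y : M) : Convex ℝ (c.S1 x y) := by
  intro s hs t ht α β hα hβ hab
  have hβ1 : β ≤ 1 := by linarith
  have hcomb : α * s + β * t = (1 - β) * s + β * t := by rw [show α = 1 - β by linarith]
  constructor
  · have := (convex_Icc (0:ℝ) 1) hs.1 ht.1 hα hβ hab
    simpa using this
  · show infDist (c.γ x (α * s + β * t)) (c.F y) ≤ _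
    rw [hcomb]
    refine le_trans (infDist_sg_comb (c.F_convex y) (c.F_nonempty y) _ _ hβ hβ1) ?_
    have h1 := hs.2
    have h2 := ht.2
    simp only [Cfg.γ] at h1 h2
    nlinarith

lemma T1_subset (x : M) : c.T1 x ⊆ Icc (0:ℝ) 1 :=
  (iInter_subset _ x).trans (c.S1_subset x x)

lemma T1_closed (x : M) : IsClosed (c.T1 x) := isClosed_iInter fun y => c.S1_closed x y

lemma T1_convex (x : M) : Convex ℝ (c.T1 x) := convex_iInter fun y => c.S1_convex x y

lemma mem_T1 {x : M} {t : ℝ} :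
    t ∈ c.T1 x ↔ t ∈ Icc (0:ℝ) 1 ∧ ∀ y, infDist (c.γ x t) (c.F y) ≤ c.lam * c.ρ x y := by
  constructor
  · intro h
    have h' := mem_iInter.1 h
    exact ⟨(h' x).1, fun y => (h' y).2⟩
  · intro ⟨h1, h2⟩
    exact mem_iInter.2 fun y => ⟨h1, h2 y⟩

/-- nonemptiness of the single constraint sets: from the 2-point condition -/
lemma S1_nonempty (x y : M) : (c.S1 x y).Nonempty := by
  obtain ⟨f, hmem, hlip⟩ := c.sel x y y y
  obtain ⟨t, ht, hteq⟩ := c.exists_param (hmem x (Or.inl rfl))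
  refine ⟨t, ht, ?_⟩
  rw [hteq]
  refine le_trans (infDist_le_dist_of_mem (hmem y (Or.inr (Or.inl rfl)))) ?_
  rw [dist_eq_norm]
  exact hlip x y (Or.inl rfl) (Or.inr (Or.inl rfl))

/-- pairwise intersection of first-level constraint sets: from the 3-point condition -/
lemma S1_pairwise (x y z : M) : (c.S1 x y ∩ c.S1 x z).Nonempty := by
  obtain ⟨f, hmem, hlip⟩ := c.sel x y z z
  obtain ⟨t, ht, hteq⟩ := c.exists_param (hmem x (Or.inl rfl))
  refine ⟨t, ⟨ht, ?_⟩, ⟨ht, ?_⟩⟩ <;> rw [hteq]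
  · refine le_trans (infDist_le_dist_of_mem (hmem y (Or.inr (Or.inl rfl)))) ?_
    rw [dist_eq_norm]
    exact hlip x y (Or.inl rfl) (Or.inr (Or.inl rfl))
  · refine le_trans (infDist_le_dist_of_mem (hmem z (Or.inr (Or.inr (Or.inl rfl))))) ?_
    rw [dist_eq_norm]
    exact hlip x z (Or.inl rfl) (Or.inr (Or.inr (Or.inl rfl)))

lemma T1_nonempty (x : M) : (c.T1 x).Nonempty := by
  have : Nonempty M := ⟨x⟩
  exact real_helly (c.S1 x) (c.S1_subset x) (c.S1_closed x) (c.S1_convex x)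
    (fun i j => c.S1_pairwise x i j)

lemma F1_nonempty (x : M) : (c.F1 x).Nonempty := (c.T1_nonempty x).image _

lemma F1_convex (x : M) : Convex ℝ (c.F1 x) := by
  intro p hp q hq α β hα hβ hab
  obtain ⟨s, hs, rfl⟩ := hp
  obtain ⟨t, ht, rfl⟩ := hq
  refine ⟨α * s + β * t, (c.T1_convex x) hs ht hα hβ hab, ?_⟩
  have hcomb : α * s + β * t = (1 - β) * s + β * t := by rw [show α = 1 - β by linarith]
  rw [hcomb]
  show sg _ _ _ = _
  rw [sg_comb, show α = 1 - β by linarith]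
  rfl

lemma F1_compact (x : M) : IsCompact (c.F1 x) := by
  refine IsCompact.image ?_ (sg_continuous _ _)
  exact isCompact_Icc.of_isClosed_subset (c.T1_closed x) (c.T1_subset x)

lemma F1_subset_F (x : M) : c.F1 x ⊆ c.F x := by
  rw [c.F_eq]; exact image_mono (c.T1_subset x)

/-- the tube property: every point of `F1 x` is close to the big set `F y` -/
lemma tube {x : M} {t : ℝ} (ht : t ∈ c.T1 x) (y : M) :
    infDist (c.γ x t) (c.F y) ≤ c.lam * c.ρ x y := ((c.mem_T1).1 ht).2 y


/-- common point of three first-level constraint sets (via 1D Helly) -/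
lemma S1_triple (x z₁ z₂ z₃ : M) : (c.S1 x z₁ ∩ c.S1 x z₂ ∩ c.S1 x z₃).Nonempty := by
  classical
  have : Nonempty (Fin 3) := ⟨0⟩
  obtain ⟨s, hs⟩ := real_helly (fun i => c.S1 x (![z₁, z₂, z₃] i))
    (fun i => c.S1_subset x _) (fun i => c.S1_closed x _) (fun i => c.S1_convex x _)
    (fun i j => c.S1_pairwise x _ _)
  have h0 := mem_iInter.1 hs 0
  have h1 := mem_iInter.1 hs 1
  have h2 := mem_iInter.1 hs 2
  simp only [Matrix.cons_val_zero, Matrix.cons_val_one, Matrix.head_cons] at h0 h1 h2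
  exact ⟨s, ⟨h0, h1⟩, by simpa using h2⟩

section LemmaB

/-- the "column" constraint sets in the product square -/
def Dc (x z : M) : Set (ℝ × ℝ) := c.S1 x z ×ˢ Icc (0:ℝ) 1

/-- the "row" constraint sets in the product square -/
def Dd (y w : M) : Set (ℝ × ℝ) := Icc (0:ℝ) 1 ×ˢ c.S1 y w

/-- the coupling constraint set in the product square -/
def De (x y : M) : Set (ℝ × ℝ) :=
  {st | st.1 ∈ Icc (0:ℝ) 1 ∧ st.2 ∈ Icc (0:ℝ) 1 ∧ ‖c.γ x st.1 - c.γ y st.2‖ ≤ c.lam * c.ρ x y}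

lemma S1_compact (x z : M) : IsCompact (c.S1 x z) :=
  isCompact_Icc.of_isClosed_subset (c.S1_closed x z) (c.S1_subset x z)

lemma Dc_convex (x z : M) : Convex ℝ (c.Dc x z) := (c.S1_convex x z).prod (convex_Icc _ _)

lemma Dd_convex (y w : M) : Convex ℝ (c.Dd y w) := (convex_Icc _ _).prod (c.S1_convex y w)

lemma Dc_compact (x z : M) : IsCompact (c.Dc x z) := (c.S1_compact x z).prod isCompact_Icc

lemma Dd_compact (y w : M) : IsCompact (c.Dd y w) := isCompact_Icc.prod (c.S1_compact y w)

lemma De_convex (x y : M) : Convex ℝ (c.De x y) := by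
  rintro ⟨s, t⟩ hst ⟨u, v⟩ huv α β hα hβ hab
  have hβ1 : β ≤ 1 := by linarith
  obtain ⟨hst1, hst2, hst3⟩ := hst
  obtain ⟨huv1, huv2, huv3⟩ := huv
  have hαβ : α = 1 - β := by linarith
  refine ⟨?_, ?_, ?_⟩
  · simpa using (convex_Icc (0:ℝ) 1) hst1 huv1 hα hβ hab
  · simpa using (convex_Icc (0:ℝ) 1) hst2 huv2 hα hβ hab
  · show ‖c.γ x (α * s + β * u) - c.γ y (α * t + β * v)‖ ≤ _
    rw [hαβ]
    have hkey : c.γ x ((1 - β) * s + β * u) - c.γ y ((1 - β) * t + β * v)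
        = (1 - β) • (c.γ x s - c.γ y t) + β • (c.γ x u - c.γ y v) := by
      simp only [Cfg.γ, sg]; module
    rw [hkey]
    refine (norm_add_le _ _).trans ?_
    rw [norm_smul, norm_smul, Real.norm_eq_abs, Real.norm_eq_abs,
      abs_of_nonneg (by linarith : (0:ℝ) ≤ 1 - β), abs_of_nonneg hβ]
    nlinarith

lemma De_compact (x y : M) : IsCompact (c.De x y) := by
  have : c.De x y = (Icc (0:ℝ) 1 ×ˢ Icc (0:ℝ) 1) ∩
      {st | ‖c.γ x st.1 - c.γ y st.2‖ ≤ c.lam * c.ρ x y} := by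
    ext ⟨s, t⟩
    simp only [De, Set.mem_inter_iff, Set.mem_prod, Set.mem_setOf_eq]
    tauto
  rw [this]
  refine (isCompact_Icc.prod isCompact_Icc).inter_right ?_
  refine isClosed_le ?_ continuous_const
  exact (((sg_continuous _ _).comp continuous_fst).sub
    ((sg_continuous _ _).comp continuous_snd)).norm

/-- the full family of constraints for the two-dimensional Helly argument -/
def DB (x y : M) : (M ⊕ (M ⊕ Unit)) → Set (ℝ × ℝ) :=
  Sum.elim (c.Dc x) (Sum.elim (c.Dd y) fun _ => c.De x y)

end LemmaB


lemma mem_Dc {x z : M} {s t : ℝ} (hs : s ∈ c.S1 x z) (ht : t ∈ Icc (0:ℝ) 1) :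
    (s, t) ∈ c.Dc x z := Set.mem_prod.2 ⟨hs, ht⟩

lemma mem_Dd {y w : M} {s t : ℝ} (hs : s ∈ Icc (0:ℝ) 1) (ht : t ∈ c.S1 y w) :
    (s, t) ∈ c.Dd y w := Set.mem_prod.2 ⟨hs, ht⟩

lemma mem_De {x y : M} {s t : ℝ} (hs : s ∈ Icc (0:ℝ) 1) (ht : t ∈ Icc (0:ℝ) 1)
    (h : ‖c.γ x s - c.γ y t‖ ≤ c.lam * c.ρ x y) : (s, t) ∈ c.De x y := ⟨hs, ht, h⟩

/-- core for triples (column, column, coupling): from the 4-point condition -/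
lemma coreCCE (x y z₁ z₂ : M) : ∃ s t : ℝ,
    s ∈ c.S1 x z₁ ∧ s ∈ c.S1 x z₂ ∧ t ∈ Icc (0:ℝ) 1 ∧
      ‖c.γ x s - c.γ y t‖ ≤ c.lam * c.ρ x y := by
  obtain ⟨f, hmem, hlip⟩ := c.sel x z₁ z₂ y
  obtain ⟨s, hs, hseq⟩ := c.exists_param (hmem x (Or.inl rfl))
  obtain ⟨t, ht, hteq⟩ := c.exists_param (hmem y (Or.inr (Or.inr (Or.inr rfl))))
  refine ⟨s, t, ⟨hs, ?_⟩, ⟨hs, ?_⟩, ht, ?_⟩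
  · rw [hseq]
    refine le_trans (infDist_le_dist_of_mem (hmem z₁ (Or.inr (Or.inl rfl)))) ?_
    rw [dist_eq_norm]; exact hlip x z₁ (Or.inl rfl) (Or.inr (Or.inl rfl))
  · rw [hseq]
    refine le_trans (infDist_le_dist_of_mem (hmem z₂ (Or.inr (Or.inr (Or.inl rfl))))) ?_
    rw [dist_eq_norm]; exact hlip x z₂ (Or.inl rfl) (Or.inr (Or.inr (Or.inl rfl)))
  · rw [hseq, hteq]
    exact hlip x y (Or.inl rfl) (Or.inr (Or.inr (Or.inr rfl)))

/-- core for triples (column, row, coupling): from the 4-point condition -/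
lemma coreCDE (x y z w : M) : ∃ s t : ℝ,
    s ∈ c.S1 x z ∧ t ∈ c.S1 y w ∧ ‖c.γ x s - c.γ y t‖ ≤ c.lam * c.ρ x y := by
  obtain ⟨f, hmem, hlip⟩ := c.sel x y z w
  obtain ⟨s, hs, hseq⟩ := c.exists_param (hmem x (Or.inl rfl))
  obtain ⟨t, ht, hteq⟩ := c.exists_param (hmem y (Or.inr (Or.inl rfl)))
  refine ⟨s, t, ⟨hs, ?_⟩, ⟨ht, ?_⟩, ?_⟩
  · rw [hseq]
    refine le_trans (infDist_le_dist_of_mem (hmem z (Or.inr (Or.inr (Or.inl rfl))))) ?_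
    rw [dist_eq_norm]; exact hlip x z (Or.inl rfl) (Or.inr (Or.inr (Or.inl rfl)))
  · rw [hteq]
    refine le_trans (infDist_le_dist_of_mem (hmem w (Or.inr (Or.inr (Or.inr rfl))))) ?_
    rw [dist_eq_norm]; exact hlip y w (Or.inr (Or.inl rfl)) (Or.inr (Or.inr (Or.inr rfl)))
  · rw [hseq, hteq]
    exact hlip x y (Or.inl rfl) (Or.inr (Or.inl rfl))

/-- core for triples (row, row, coupling): mirror of `coreCCE` -/
lemma coreDDE (x y w₁ w₂ : M) : ∃ s t : ℝ,
    s ∈ Icc (0:ℝ) 1 ∧ t ∈ c.S1 y w₁ ∧ t ∈ c.S1 y w₂ ∧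
      ‖c.γ x s - c.γ y t‖ ≤ c.lam * c.ρ x y := by
  obtain ⟨t, s, ht1, ht2, hs, hc⟩ := c.coreCCE y x w₁ w₂
  refine ⟨s, t, hs, ht1, ht2, ?_⟩
  rw [← norm_neg, neg_sub, ← c.hρsymm y x]
  exact hc

lemma DB_triple (x y : M) (i j k : M ⊕ (M ⊕ Unit)) :
    (c.DB x y i ∩ (c.DB x y j ∩ c.DB x y k)).Nonempty := by
  have I0 : (0:ℝ) ∈ Icc (0:ℝ) 1 := ⟨le_rfl, zero_le_one⟩
  rcases i with z₁ | w₁ | _ <;> rcases j with z₂ | w₂ | _ <;> rcases k with z₃ | w₃ | _ <;>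
    simp only [DB, Sum.elim_inl, Sum.elim_inr]
  -- CCC
  · obtain ⟨s, ⟨h1, h2⟩, h3⟩ := c.S1_triple x z₁ z₂ z₃
    exact ⟨(s, 0), c.mem_Dc h1 I0, c.mem_Dc h2 I0, c.mem_Dc h3 I0⟩
  -- CCD
  · obtain ⟨s, ⟨h1, h2⟩, _⟩ := c.S1_triple x z₁ z₂ z₂
    obtain ⟨t, ht⟩ := c.S1_nonempty y w₃
    exact ⟨(s, t), c.mem_Dc h1 (c.S1_subset y w₃ ht), c.mem_Dc h2 (c.S1_subset y w₃ ht),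
      c.mem_Dd (c.S1_subset x z₁ h1) ht⟩
  -- CCE
  · obtain ⟨s, t, h1, h2, ht, hc⟩ := c.coreCCE x y z₁ z₂
    exact ⟨(s, t), c.mem_Dc h1 ht, c.mem_Dc h2 ht, c.mem_De (c.S1_subset x z₁ h1) ht hc⟩
  -- CDC
  · obtain ⟨s, ⟨h1, h3⟩, _⟩ := c.S1_triple x z₁ z₃ z₃
    obtain ⟨t, ht⟩ := c.S1_nonempty y w₂
    exact ⟨(s, t), c.mem_Dc h1 (c.S1_subset y w₂ ht), c.mem_Dd (c.S1_subset x z₁ h1) ht,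
      c.mem_Dc h3 (c.S1_subset y w₂ ht)⟩
  -- CDD
  · obtain ⟨s, hs⟩ := c.S1_nonempty x z₁
    obtain ⟨t, ⟨h2, h3⟩, _⟩ := c.S1_triple y w₂ w₃ w₃
    exact ⟨(s, t), c.mem_Dc hs (c.S1_subset y w₂ h2), c.mem_Dd (c.S1_subset x z₁ hs) h2,
      c.mem_Dd (c.S1_subset x z₁ hs) h3⟩
  -- CDE
  · obtain ⟨s, t, hs, ht, hc⟩ := c.coreCDE x y z₁ w₂
    exact ⟨(s, t), c.mem_Dc hs (c.S1_subset y w₂ ht), c.mem_Dd (c.S1_subset x z₁ hs) ht,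
      c.mem_De (c.S1_subset x z₁ hs) (c.S1_subset y w₂ ht) hc⟩
  -- CEC
  · obtain ⟨s, t, h1, h3, ht, hc⟩ := c.coreCCE x y z₁ z₃
    exact ⟨(s, t), c.mem_Dc h1 ht, c.mem_De (c.S1_subset x z₁ h1) ht hc, c.mem_Dc h3 ht⟩
  -- CED
  · obtain ⟨s, t, hs, ht, hc⟩ := c.coreCDE x y z₁ w₃
    exact ⟨(s, t), c.mem_Dc hs (c.S1_subset y w₃ ht),
      c.mem_De (c.S1_subset x z₁ hs) (c.S1_subset y w₃ ht) hc,
      c.mem_Dd (c.S1_subset x z₁ hs) ht⟩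
  -- CEE
  · obtain ⟨s, t, h1, _, ht, hc⟩ := c.coreCCE x y z₁ z₁
    exact ⟨(s, t), c.mem_Dc h1 ht, c.mem_De (c.S1_subset x z₁ h1) ht hc,
      c.mem_De (c.S1_subset x z₁ h1) ht hc⟩
  -- DCC
  · obtain ⟨s, ⟨h2, h3⟩, _⟩ := c.S1_triple x z₂ z₃ z₃
    obtain ⟨t, ht⟩ := c.S1_nonempty y w₁
    exact ⟨(s, t), c.mem_Dd (c.S1_subset x z₂ h2) ht, c.mem_Dc h2 (c.S1_subset y w₁ ht),
      c.mem_Dc h3 (c.S1_subset y w₁ ht)⟩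
  -- DCD
  · obtain ⟨s, hs⟩ := c.S1_nonempty x z₂
    obtain ⟨t, ⟨h1, h3⟩, _⟩ := c.S1_triple y w₁ w₃ w₃
    exact ⟨(s, t), c.mem_Dd (c.S1_subset x z₂ hs) h1, c.mem_Dc hs (c.S1_subset y w₁ h1),
      c.mem_Dd (c.S1_subset x z₂ hs) h3⟩
  -- DCE
  · obtain ⟨s, t, hs, ht, hc⟩ := c.coreCDE x y z₂ w₁
    exact ⟨(s, t), c.mem_Dd (c.S1_subset x z₂ hs) ht, c.mem_Dc hs (c.S1_subset y w₁ ht),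
      c.mem_De (c.S1_subset x z₂ hs) (c.S1_subset y w₁ ht) hc⟩
  -- DDC
  · obtain ⟨s, hs⟩ := c.S1_nonempty x z₃
    obtain ⟨t, ⟨h1, h2⟩, _⟩ := c.S1_triple y w₁ w₂ w₂
    exact ⟨(s, t), c.mem_Dd (c.S1_subset x z₃ hs) h1, c.mem_Dd (c.S1_subset x z₃ hs) h2,
      c.mem_Dc hs (c.S1_subset y w₁ h1)⟩
  -- DDD
  · obtain ⟨t, ⟨h1, h2⟩, h3⟩ := c.S1_triple y w₁ w₂ w₃
    exact ⟨(0, t), c.mem_Dd I0 h1, c.mem_Dd I0 h2, c.mem_Dd I0 h3⟩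
  -- DDE
  · obtain ⟨s, t, hs, h1, h2, hc⟩ := c.coreDDE x y w₁ w₂
    exact ⟨(s, t), c.mem_Dd hs h1, c.mem_Dd hs h2, c.mem_De hs (c.S1_subset y w₁ h1) hc⟩
  -- DEC
  · obtain ⟨s, t, hs, ht, hc⟩ := c.coreCDE x y z₃ w₁
    exact ⟨(s, t), c.mem_Dd (c.S1_subset x z₃ hs) ht,
      c.mem_De (c.S1_subset x z₃ hs) (c.S1_subset y w₁ ht) hc,
      c.mem_Dc hs (c.S1_subset y w₁ ht)⟩
  -- DED
  · obtain ⟨s, t, hs, h1, h3, hc⟩ := c.coreDDE x y w₁ w₃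
    exact ⟨(s, t), c.mem_Dd hs h1, c.mem_De hs (c.S1_subset y w₁ h1) hc, c.mem_Dd hs h3⟩
  -- DEE
  · obtain ⟨s, t, hs, h1, _, hc⟩ := c.coreDDE x y w₁ w₁
    exact ⟨(s, t), c.mem_Dd hs h1, c.mem_De hs (c.S1_subset y w₁ h1) hc,
      c.mem_De hs (c.S1_subset y w₁ h1) hc⟩
  -- ECC
  · obtain ⟨s, t, h2, h3, ht, hc⟩ := c.coreCCE x y z₂ z₃
    exact ⟨(s, t), c.mem_De (c.S1_subset x z₂ h2) ht hc, c.mem_Dc h2 ht, c.mem_Dc h3 ht⟩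
  -- ECD
  · obtain ⟨s, t, hs, ht, hc⟩ := c.coreCDE x y z₂ w₃
    exact ⟨(s, t), c.mem_De (c.S1_subset x z₂ hs) (c.S1_subset y w₃ ht) hc,
      c.mem_Dc hs (c.S1_subset y w₃ ht), c.mem_Dd (c.S1_subset x z₂ hs) ht⟩
  -- ECE
  · obtain ⟨s, t, h2, _, ht, hc⟩ := c.coreCCE x y z₂ z₂
    exact ⟨(s, t), c.mem_De (c.S1_subset x z₂ h2) ht hc, c.mem_Dc h2 ht,
      c.mem_De (c.S1_subset x z₂ h2) ht hc⟩
  -- EDC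
  · obtain ⟨s, t, hs, ht, hc⟩ := c.coreCDE x y z₃ w₂
    exact ⟨(s, t), c.mem_De (c.S1_subset x z₃ hs) (c.S1_subset y w₂ ht) hc,
      c.mem_Dd (c.S1_subset x z₃ hs) ht, c.mem_Dc hs (c.S1_subset y w₂ ht)⟩
  -- EDD
  · obtain ⟨s, t, hs, h2, h3, hc⟩ := c.coreDDE x y w₂ w₃
    exact ⟨(s, t), c.mem_De hs (c.S1_subset y w₂ h2) hc, c.mem_Dd hs h2, c.mem_Dd hs h3⟩
  -- EDE
  · obtain ⟨s, t, hs, h2, _, hc⟩ := c.coreDDE x y w₂ w₂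
    exact ⟨(s, t), c.mem_De hs (c.S1_subset y w₂ h2) hc, c.mem_Dd hs h2,
      c.mem_De hs (c.S1_subset y w₂ h2) hc⟩
  -- EEC
  · obtain ⟨s, t, h3, _, ht, hc⟩ := c.coreCCE x y z₃ z₃
    exact ⟨(s, t), c.mem_De (c.S1_subset x z₃ h3) ht hc,
      c.mem_De (c.S1_subset x z₃ h3) ht hc, c.mem_Dc h3 ht⟩
  -- EED
  · obtain ⟨s, t, hs, h3, _, hc⟩ := c.coreDDE x y w₃ w₃
    exact ⟨(s, t), c.mem_De hs (c.S1_subset y w₃ h3) hc,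
      c.mem_De hs (c.S1_subset y w₃ h3) hc, c.mem_Dd hs h3⟩
  -- EEE
  · obtain ⟨s, t, h1, _, ht, hc⟩ := c.coreCCE x y x x
    exact ⟨(s, t), c.mem_De (c.S1_subset x x h1) ht hc,
      c.mem_De (c.S1_subset x x h1) ht hc, c.mem_De (c.S1_subset x x h1) ht hc⟩


/-- **Lemma B**: the refined sets `F1` satisfy the 2-point condition with constant `lam`. -/
lemma lemmaB (x y : M) : ∃ s ∈ c.T1 x, ∃ t ∈ c.T1 y,
    ‖c.γ x s - c.γ y t‖ ≤ c.lam * c.ρ x y := by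
  classical
  have hconv : ∀ i, Convex ℝ (c.DB x y i) := by
    rintro (z | w | u)
    · exact c.Dc_convex x z
    · exact c.Dd_convex y w
    · exact c.De_convex x y
  have hcomp : ∀ i, IsCompact (c.DB x y i) := by
    rintro (z | w | u)
    · exact c.Dc_compact x z
    · exact c.Dd_compact y w
    · exact c.De_compact x y
  have hrank : Module.finrank ℝ (ℝ × ℝ) = 2 := by
    simp [Module.finrank_prod]
  have h_inter : ∀ I : Finset (M ⊕ (M ⊕ Unit)),
      I.card ≤ Module.finrank ℝ (ℝ × ℝ) + 1 → (⋂ i ∈ I, c.DB x y i).Nonempty := by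
    intro I hI
    rw [hrank] at hI
    have : Nonempty (M ⊕ (M ⊕ Unit)) := ⟨Sum.inr (Sum.inr ())⟩
    obtain ⟨i, j, k, hcov⟩ := exists_three_cover I hI
    refine (c.DB_triple x y i j k).mono ?_
    refine Set.subset_iInter₂ fun a ha => ?_
    rcases hcov a ha with rfl | rfl | rfl
    · exact (Set.inter_subset_left)
    · exact (Set.inter_subset_right).trans (Set.inter_subset_left)
    · exact (Set.inter_subset_right).trans (Set.inter_subset_right)
  obtain ⟨⟨s, t⟩, hst⟩ := Convex.helly_theorem_compact' (𝕜 := ℝ) hconv hcomp h_inter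
  have hmem := mem_iInter.1 hst
  have hs : s ∈ c.T1 x := by
    refine mem_iInter.2 fun z => ?_
    have := hmem (Sum.inl z)
    exact (Set.mem_prod.1 this).1
  have ht : t ∈ c.T1 y := by
    refine mem_iInter.2 fun w => ?_
    have := hmem (Sum.inr (Sum.inl w))
    exact (Set.mem_prod.1 this).2
  have he := hmem (Sum.inr (Sum.inr ()))
  exact ⟨s, hs, t, ht, he.2.2⟩


lemma mem_F1 {x : M} {t : ℝ} (ht : t ∈ c.T1 x) : c.γ x t ∈ c.F1 x := ⟨t, ht, rfl⟩

lemma lam_rho_tri (x y z : M) : c.lam * c.ρ x y ≤ c.lam * c.ρ x z + c.lam * c.ρ z y := by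
  have := c.hρtri x y z
  nlinarith [c.hlam.le]

/-- **Key Lemma** (asymmetric version) -/
lemma keyLemma_aux (x y₁ y₂ : M) (hr : c.ρ x y₁ ≤ c.ρ x y₂) :
    ∃ s ∈ c.T1 x, infDist (c.γ x s) (c.F1 y₁) ≤ 3 * (c.lam * c.ρ x y₁) ∧
      infDist (c.γ x s) (c.F1 y₂) ≤ 3 * (c.lam * c.ρ x y₂) := by
  obtain ⟨t₁, ht₁, s₁, hs₁, h₁⟩ := c.lemmaB x y₁
  obtain ⟨t₂, ht₂, s₂, hs₂, h₂⟩ := c.lemmaB x y₂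
  obtain ⟨u₁, hu₁, u₂, hu₂, hu⟩ := c.lemmaB y₁ y₂
  set r₁ := c.lam * c.ρ x y₁ with hr₁
  set r₂ := c.lam * c.ρ x y₂ with hr₂
  have hr₁0 : 0 ≤ r₁ := c.r_nonneg x y₁
  have hr₂0 : 0 ≤ r₂ := c.r_nonneg x y₂
  have hrr : r₁ ≤ r₂ := by
    have := c.hlam.le
    nlinarith
  have hr3 : c.lam * c.ρ y₁ y₂ ≤ r₁ + r₂ := by
    have h := c.lam_rho_tri y₁ y₂ x
    rw [c.hρsymm y₁ x, c.hρsymm x y₂] at h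
    rw [hr₁, hr₂, c.hρsymm x y₂]
    linarith
  -- nearest point of `F x` to `γ y₁ u₁`
  obtain ⟨z₂, hz₂mem, hz₂eq⟩ :=
    (c.F_compact x).exists_infDist_eq_dist (c.F_nonempty x) (c.γ y₁ u₁)
  have hz₂ : dist (c.γ y₁ u₁) z₂ ≤ r₁ := by
    rw [← hz₂eq, hr₁, ← c.hρsymm y₁ x]
    exact c.tube hu₁ x
  obtain ⟨t₃, ht₃, ht₃eq⟩ := c.exists_param hz₂mem
  have hmem1 : c.γ y₁ u₁ ∈ c.F1 y₁ := c.mem_F1 hu₁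
  have hmem2 : c.γ y₂ u₂ ∈ c.F1 y₂ := c.mem_F1 hu₂
  have hmem1' : c.γ y₁ s₁ ∈ c.F1 y₁ := c.mem_F1 hs₁
  have hmem2' : c.γ y₂ s₂ ∈ c.F1 y₂ := c.mem_F1 hs₂
  -- distance estimates at the three parameters
  have e11 : infDist (c.γ x t₁) (c.F1 y₁) ≤ r₁ := by
    refine le_trans (infDist_le_dist_of_mem hmem1') ?_
    rw [dist_eq_norm]; exact h₁
  have e22 : infDist (c.γ x t₂) (c.F1 y₂) ≤ r₂ := by
    refine le_trans (infDist_le_dist_of_mem hmem2') ?_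
    rw [dist_eq_norm]; exact h₂
  have e31 : infDist (c.γ x t₃) (c.F1 y₁) ≤ r₁ := by
    rw [ht₃eq]
    refine le_trans (infDist_le_dist_of_mem hmem1) ?_
    rw [dist_comm]; exact hz₂
  have e32 : infDist (c.γ x t₃) (c.F1 y₂) ≤ 2 * r₁ + r₂ := by
    rw [ht₃eq]
    refine le_trans (infDist_le_dist_of_mem hmem2) ?_
    refine le_trans (dist_triangle z₂ (c.γ y₁ u₁) (c.γ y₂ u₂)) ?_
    have hd : dist (c.γ y₁ u₁) (c.γ y₂ u₂) ≤ r₁ + r₂ := by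
      rw [dist_eq_norm]; exact le_trans hu hr3
    rw [dist_comm z₂ _]
    linarith
  rcases three_order t₃ t₁ t₂ with hmid | hmid | hmid
  · -- t₃ between t₁ and t₂
    refine ⟨t₃, ((c.T1_convex x).ordConnected).uIcc_subset ht₁ ht₂ hmid, ?_, ?_⟩
    · linarith
    · linarith
  · -- t₁ between t₃ and t₂
    refine ⟨t₁, ht₁, by linarith, ?_⟩
    have := infDist_sg_le_max (c.F1_convex y₂) (c.F1_nonempty y₂) (c.A x) (c.B x) hmid
    rw [show sg (c.A x) (c.B x) = c.γ x from rfl] at this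
    refine le_trans this ?_
    refine le_trans (max_le_max e32 e22) ?_
    simp only [max_le_iff]
    constructor <;> linarith
  · -- t₂ between t₃ and t₁
    refine ⟨t₂, ht₂, ?_, by linarith⟩
    have := infDist_sg_le_max (c.F1_convex y₁) (c.F1_nonempty y₁) (c.A x) (c.B x) hmid
    rw [show sg (c.A x) (c.B x) = c.γ x from rfl] at this
    refine le_trans this ?_
    refine le_trans (max_le_max e31 e11) ?_
    simp only [max_le_iff]
    constructor <;> linarith

/-- **Key Lemma**: common approximate point for two targets. -/
lemma keyLemma (x y₁ y₂ : M) :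
    ∃ s ∈ c.T1 x, infDist (c.γ x s) (c.F1 y₁) ≤ 3 * (c.lam * c.ρ x y₁) ∧
      infDist (c.γ x s) (c.F1 y₂) ≤ 3 * (c.lam * c.ρ x y₂) := by
  rcases le_total (c.ρ x y₁) (c.ρ x y₂) with h | h
  · exact c.keyLemma_aux x y₁ y₂ h
  · obtain ⟨s, hs, h1, h2⟩ := c.keyLemma_aux x y₂ y₁ h
    exact ⟨s, hs, h2, h1⟩

/-- the second refinement, at the level of parameters -/
def S2 (x y : M) : Set ℝ :=
  {t | t ∈ c.T1 x ∧ infDist (c.γ x t) (c.F1 y) ≤ 3 * (c.lam * c.ρ x y)}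

def T2 (x : M) : Set ℝ := ⋂ y, c.S2 x y

/-- the second refinement -/
def F2 (x : M) : Set X := c.γ x '' c.T2 x

lemma S2_subset (x y : M) : c.S2 x y ⊆ Icc (0:ℝ) 1 := fun _ h => c.T1_subset x h.1

lemma S2_closed (x y : M) : IsClosed (c.S2 x y) := by
  refine IsClosed.inter (c.T1_closed x) ?_
  exact isClosed_le ((continuous_infDist_pt _).comp (sg_continuous _ _)) continuous_const

lemma S2_convex (x y : M) : Convex ℝ (c.S2 x y) := by
  intro s hs t ht α β hα hβ hab
  have hβ1 : β ≤ 1 := by linarith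
  have hcomb : α * s + β * t = (1 - β) * s + β * t := by rw [show α = 1 - β by linarith]
  refine ⟨(c.T1_convex x) hs.1 ht.1 hα hβ hab, ?_⟩
  show infDist (c.γ x (α * s + β * t)) (c.F1 y) ≤ _
  rw [hcomb]
  refine le_trans (infDist_sg_comb (c.F1_convex y) (c.F1_nonempty y) _ _ hβ hβ1) ?_
  have h1 := hs.2
  have h2 := ht.2
  simp only [Cfg.γ] at h1 h2
  nlinarith

lemma S2_nonempty (x y : M) : (c.S2 x y).Nonempty := by
  obtain ⟨s, hs, t, ht, h⟩ := c.lemmaB x y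
  refine ⟨s, hs, ?_⟩
  refine le_trans (infDist_le_dist_of_mem (c.mem_F1 ht)) ?_
  rw [dist_eq_norm]
  have := c.r_nonneg x y
  linarith

lemma S2_pairwise (x y z : M) : (c.S2 x y ∩ c.S2 x z).Nonempty := by
  obtain ⟨s, hs, h1, h2⟩ := c.keyLemma x y z
  exact ⟨s, ⟨hs, h1⟩, ⟨hs, h2⟩⟩

lemma T2_nonempty (x : M) : (c.T2 x).Nonempty := by
  have : Nonempty M := ⟨x⟩
  exact real_helly (c.S2 x) (c.S2_subset x) (c.S2_closed x) (c.S2_convex x)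
    (fun i j => c.S2_pairwise x i j)

lemma T2_subset (x : M) : c.T2 x ⊆ c.T1 x := fun t ht => (mem_iInter.1 ht x).1

lemma T2_closed (x : M) : IsClosed (c.T2 x) := isClosed_iInter fun y => c.S2_closed x y

lemma T2_convex (x : M) : Convex ℝ (c.T2 x) := convex_iInter fun y => c.S2_convex x y

lemma mem_T2 {x : M} {t : ℝ} :
    t ∈ c.T2 x ↔ t ∈ c.T1 x ∧ ∀ y, infDist (c.γ x t) (c.F1 y) ≤ 3 * (c.lam * c.ρ x y) := by
  constructor
  · intro h
    have h' := mem_iInter.1 h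
    exact ⟨(h' x).1, fun y => (h' y).2⟩
  · intro ⟨h1, h2⟩
    exact mem_iInter.2 fun y => ⟨h1, h2 y⟩


lemma norm_γ_sub (y : M) (a b : ℝ) : ‖c.γ y a - c.γ y b‖ = |a - b| * ‖c.B y - c.A y‖ := by
  rw [show c.γ y a = sg (c.A y) (c.B y) a from rfl, show c.γ y b = sg (c.A y) (c.B y) b from rfl,
    norm_sg_sub]

/-- a point of `T1 y` whose image is within `3r` of a given point of `F2 x` -/
lemma near_point (x y : M) {s : ℝ} (hs : s ∈ c.T2 x) :
    ∃ t ∈ c.T1 y, ‖c.γ y t - c.γ x s‖ ≤ 3 * (c.lam * c.ρ x y) := by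
  have h3r : infDist (c.γ x s) (c.F1 y) ≤ 3 * (c.lam * c.ρ x y) := ((c.mem_T2).1 hs).2 y
  obtain ⟨q, hqmem, hqeq⟩ :=
    (c.F1_compact y).exists_infDist_eq_dist (c.F1_nonempty y) (c.γ x s)
  obtain ⟨t, ht, rfl⟩ := hqmem
  refine ⟨t, ht, ?_⟩
  rw [← norm_neg, neg_sub, ← dist_eq_norm, ← hqeq]
  exact h3r

set_option maxHeartbeats 2000000 in
/-- **The walk lemma**: given `p ∈ F2 x`, there is a point of `F1 y` within `15 r` of `p`
satisfying the second-level constraint associated to `w`. -/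
lemma walk_core (x y w : M) {s : ℝ} (hs : s ∈ c.T2 x) :
    ∃ t, t ∈ c.S2 y w ∧ ‖c.γ y t - c.γ x s‖ ≤ 15 * (c.lam * c.ρ x y) := by
  set p := c.γ x s with hp
  set r := c.lam * c.ρ x y with hrdef
  set sw := c.lam * c.ρ y w with hswdef
  have hr0 : 0 ≤ r := c.r_nonneg x y
  have hsw0 : 0 ≤ sw := c.r_nonneg y w
  have hτ : c.lam * c.ρ x w ≤ r + sw := c.lam_rho_tri x w y
  obtain ⟨t_q, htq, hq⟩ := c.near_point x y hs
  by_cases hgq : infDist (c.γ y t_q) (c.F1 w) ≤ 3 * sw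
  · exact ⟨t_q, ⟨htq, hgq⟩, le_trans hq (by nlinarith)⟩
  push_neg at hgq
  -- nearest point of `F1 w` to `p`
  have h3τ : infDist p (c.F1 w) ≤ 3 * (r + sw) := by
    refine le_trans (((c.mem_T2).1 hs).2 w) ?_
    nlinarith
  obtain ⟨v, hvmem, hveq⟩ := (c.F1_compact w).exists_infDist_eq_dist (c.F1_nonempty w) p
  obtain ⟨u_v, huv, rfl⟩ := hvmem
  have hv : dist p (c.γ w u_v) ≤ 3 * (r + sw) := by rw [← hveq]; exact h3τ
  -- project that point back into `F y`
  have htubev : infDist (c.γ w u_v) (c.F y) ≤ sw := by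
    rw [hswdef, c.hρsymm y w]
    exact c.tube huv y
  obtain ⟨w₀, hw₀mem, hw₀eq⟩ :=
    (c.F_compact y).exists_infDist_eq_dist (c.F_nonempty y) (c.γ w u_v)
  obtain ⟨t_w, htw, rfl⟩ := c.exists_param hw₀mem
  have hw₀ : dist (c.γ w u_v) (c.γ y t_w) ≤ sw := by rw [← hw₀eq]; exact htubev
  -- the pair between y and w
  obtain ⟨t_β, htβ, u_β, huβ, hβ⟩ := c.lemmaB y w
  -- distance estimates
  have hg_w : infDist (c.γ y t_w) (c.F1 w) ≤ sw := by
    refine le_trans (infDist_le_dist_of_mem (c.mem_F1 huv)) ?_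
    rw [dist_comm]; exact hw₀
  have hg_β : infDist (c.γ y t_β) (c.F1 w) ≤ sw := by
    refine le_trans (infDist_le_dist_of_mem (c.mem_F1 huβ)) ?_
    rw [dist_eq_norm]; exact hβ
  set g0 := infDist (c.γ y t_q) (c.F1 w) with hg0def
  have hg0 : g0 ≤ 6 * r + 3 * sw := by
    have h1 : g0 ≤ infDist p (c.F1 w) + dist (c.γ y t_q) p := infDist_le_infDist_add_dist
    have h2 : dist (c.γ y t_q) p = ‖c.γ y t_q - c.γ x s‖ := by rw [dist_eq_norm, hp]
    nlinarith [hq, h3τ]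
  -- t_q is not between t_β and t_w
  have hside : (t_β < t_q ∧ t_w < t_q) ∨ (t_q < t_β ∧ t_q < t_w) := by
    have hnot : t_q ∉ uIcc t_β t_w := by
      intro hmem
      have := infDist_sg_le_max (c.F1_convex w) (c.F1_nonempty w) (c.A y) (c.B y) hmem
      rw [show sg (c.A y) (c.B y) = c.γ y from rfl] at this
      have : g0 ≤ sw := le_trans this (by simp [max_le_iff]; exact ⟨hg_β, hg_w⟩)
      nlinarith
    rw [Set.mem_uIcc] at hnot
    push_neg at hnot
    rcases le_total t_β t_q with h1 | h1
    · exact Or.inl ⟨hnot.2 (hnot.1 h1).le, hnot.1 h1⟩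
    · rcases le_total t_w t_q with h4 | h4
      · exact Or.inl ⟨hnot.2 h4, hnot.1 (hnot.2 h4).le⟩
      · have h2 : t_q < t_w := lt_of_le_of_ne h4
          (fun he => absurd (hnot.2 (le_of_eq he.symm)) (not_lt.2 h1))
        have h3 : t_q < t_β := lt_of_le_of_ne h1
          (fun he => absurd (hnot.1 (le_of_eq he.symm)) (not_lt.2 h4))
        exact Or.inr ⟨h3, h2⟩
  -- the walking parameter
  set θ := (g0 - 3 * sw) / (g0 - sw) with hθdef
  have hden : 0 < g0 - sw := by nlinarith
  have hθ0 : 0 ≤ θ := div_nonneg (by nlinarith) hden.le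
  have hθ1 : θ ≤ 1 := by
    rw [div_le_one hden]; nlinarith
  have hθmul : θ * (g0 - sw) = g0 - 3 * sw := div_mul_cancel₀ _ hden.ne'
  set tstar := (1 - θ) * t_q + θ * t_w with htstar
  have hgstar : infDist (c.γ y tstar) (c.F1 w) ≤ 3 * sw := by
    have hcomb := infDist_sg_comb (c.F1_convex w) (c.F1_nonempty w) (c.A y) (c.B y)
      (s := t_q) (t := t_w) hθ0 hθ1
    rw [show sg (c.A y) (c.B y) = c.γ y from rfl] at hcomb
    refine le_trans hcomb ?_
    have h1 : (1 - θ) * g0 + θ * infDist (c.γ y t_w) (c.F1 w) ≤ (1 - θ) * g0 + θ * sw := by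
      nlinarith
    nlinarith
  -- the travel estimate
  have hlen : ‖c.γ y t_w - c.γ y t_q‖ ≤ 6 * r + 4 * sw := by
    have h1 : ‖c.γ y t_w - c.γ y t_q‖ ≤ dist (c.γ y t_w) (c.γ w u_v) + dist (c.γ w u_v) p
        + dist p (c.γ y t_q) := by
      rw [← dist_eq_norm]
      exact dist_triangle4 _ _ _ _
    have h2 : dist p (c.γ y t_q) = ‖c.γ y t_q - c.γ x s‖ := by
      rw [dist_eq_norm, hp, norm_sub_rev]
    rw [dist_comm (c.γ y t_w) (c.γ w u_v), dist_comm (c.γ w u_v) p] at h1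
    nlinarith [hw₀, hv, hq]
  have htravel : |tstar - t_q| * ‖c.B y - c.A y‖ ≤ 12 * r := by
    have h1 : tstar - t_q = θ * (t_w - t_q) := by rw [htstar]; ring
    have h2 : |tstar - t_q| * ‖c.B y - c.A y‖ = θ * (|t_w - t_q| * ‖c.B y - c.A y‖) := by
      rw [h1, abs_mul, abs_of_nonneg hθ0, mul_assoc]
    rw [h2, ← norm_γ_sub]
    have h3 : θ * ‖c.γ y t_w - c.γ y t_q‖ ≤ θ * (6 * r + 4 * sw) := by
      exact mul_le_mul_of_nonneg_left hlen hθ0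
    refine le_trans h3 ?_
    nlinarith [hθmul, hg0, hgq, hsw0, hr0, hθ1, hθ0]
  -- final case analysis on the position of `t_β`
  have hfinal : ∀ t_fin : ℝ, t_fin ∈ c.S2 y w → |t_fin - t_q| ≤ |tstar - t_q| →
      ‖c.γ y t_fin - c.γ x s‖ ≤ 15 * (c.lam * c.ρ x y) := by
    intro t_fin hmem hdist
    have h1 : ‖c.γ y t_fin - c.γ x s‖ ≤ ‖c.γ y t_fin - c.γ y t_q‖ + ‖c.γ y t_q - c.γ x s‖ := by
      have h := dist_triangle (c.γ y t_fin) (c.γ y t_q) (c.γ x s)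
      rw [dist_eq_norm, dist_eq_norm, dist_eq_norm] at h
      exact h
    have h2 : ‖c.γ y t_fin - c.γ y t_q‖ ≤ 12 * r := by
      rw [norm_γ_sub]
      refine le_trans ?_ htravel
      exact mul_le_mul_of_nonneg_right hdist (norm_nonneg _)
    rw [← hrdef]
    nlinarith [hq]
  rcases hside with ⟨hb, hw'⟩ | ⟨hb, hw'⟩
  · -- both to the left of t_q : tstar ≤ t_q
    have hts : tstar ≤ t_q := by nlinarith
    rcases le_total t_β tstar with hcase | hcase
    · -- tstar between t_β and t_q : tstar ∈ T1 y
      have htsmem : tstar ∈ c.T1 y := by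
        refine ((c.T1_convex y).ordConnected).uIcc_subset htq htβ ?_
        rw [Set.mem_uIcc]
        exact Or.inr ⟨hcase, hts⟩
      exact ⟨tstar, ⟨htsmem, hgstar⟩, hfinal _ ⟨htsmem, hgstar⟩ le_rfl⟩
    · -- t_β between tstar and t_q
      have hmem : t_β ∈ c.S2 y w := ⟨htβ, by nlinarith⟩
      refine ⟨t_β, hmem, hfinal _ hmem ?_⟩
      rw [abs_of_nonpos (by linarith), abs_of_nonpos (by linarith)]
      linarith
  · -- both to the right of t_q : t_q ≤ tstar
    have hts : t_q ≤ tstar := by nlinarith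
    rcases le_total tstar t_β with hcase | hcase
    · have htsmem : tstar ∈ c.T1 y := by
        refine ((c.T1_convex y).ordConnected).uIcc_subset htq htβ ?_
        rw [Set.mem_uIcc]
        exact Or.inl ⟨hts, hcase⟩
      exact ⟨tstar, ⟨htsmem, hgstar⟩, hfinal _ ⟨htsmem, hgstar⟩ le_rfl⟩
    · have hmem : t_β ∈ c.S2 y w := ⟨htβ, by nlinarith⟩
      refine ⟨t_β, hmem, hfinal _ hmem ?_⟩
      rw [abs_of_nonneg (by linarith), abs_of_nonneg (by linarith)]
      linarith


/-- The two-sided approximation property of the second refinement. -/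
lemma walk (x y : M) {s : ℝ} (hs : s ∈ c.T2 x) :
    ∃ t ∈ c.T2 y, ‖c.γ y t - c.γ x s‖ ≤ 15 * (c.lam * c.ρ x y) := by
  classical
  set d := 15 * (c.lam * c.ρ x y) with hd
  have hr0 : 0 ≤ c.lam * c.ρ x y := c.r_nonneg x y
  set SW : Option M → Set ℝ :=
    fun o => o.elim {t | t ∈ c.T1 y ∧ ‖c.γ y t - c.γ x s‖ ≤ d} (c.S2 y) with hSW
  have hsub : ∀ o, SW o ⊆ Icc (0:ℝ) 1 := by
    rintro (_ | w)
    · exact fun t ht => c.T1_subset y ht.1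
    · exact c.S2_subset y w
  have hcl : ∀ o, IsClosed (SW o) := by
    rintro (_ | w)
    · refine IsClosed.inter (c.T1_closed y) ?_
      exact isClosed_le ((((sg_continuous (c.A y) (c.B y))).sub continuous_const).norm)
        continuous_const
    · exact c.S2_closed y w
  have hcv : ∀ o, Convex ℝ (SW o) := by
    rintro (_ | w)
    · intro t₁ ht₁ t₂ ht₂ a b ha hb hab
      have hb1 : b ≤ 1 := by linarith
      have hcomb : a * t₁ + b * t₂ = (1 - b) * t₁ + b * t₂ := by
        rw [show a = 1 - b by linarith]
      refine ⟨(c.T1_convex y) ht₁.1 ht₂.1 ha hb hab, ?_⟩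
      show ‖c.γ y (a * t₁ + b * t₂) - c.γ x s‖ ≤ d
      rw [hcomb]
      have hkey : c.γ y ((1 - b) * t₁ + b * t₂) - c.γ x s
          = (1 - b) • (c.γ y t₁ - c.γ x s) + b • (c.γ y t₂ - c.γ x s) := by
        simp only [Cfg.γ, sg]; module
      rw [hkey]
      refine (norm_add_le _ _).trans ?_
      rw [norm_smul, norm_smul, Real.norm_eq_abs, Real.norm_eq_abs,
        abs_of_nonneg (by linarith : (0:ℝ) ≤ 1 - b), abs_of_nonneg hb]
      nlinarith [ht₁.2, ht₂.2]
    · exact c.S2_convex y w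
  have hpairNS : ∀ w, (SW none ∩ SW (some w)).Nonempty := by
    intro w
    obtain ⟨t, hmem, hb⟩ := c.walk_core x y w hs
    exact ⟨t, ⟨hmem.1, hb⟩, hmem⟩
  have hpair : ∀ o₁ o₂, (SW o₁ ∩ SW o₂).Nonempty := by
    rintro (_ | w₁) (_ | w₂)
    · obtain ⟨t, ht, hb⟩ := c.near_point x y hs
      have hb' : ‖c.γ y t - c.γ x s‖ ≤ d := le_trans hb (by rw [hd]; nlinarith)
      exact ⟨t, ⟨ht, hb'⟩, ⟨ht, hb'⟩⟩
    · exact hpairNS w₂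
    · obtain ⟨t, h1, h2⟩ := hpairNS w₁
      exact ⟨t, h2, h1⟩
    · exact c.S2_pairwise y w₁ w₂
  have : Nonempty (Option M) := ⟨none⟩
  obtain ⟨t, ht⟩ := real_helly SW hsub hcl hcv hpair
  have hmem := mem_iInter.1 ht
  refine ⟨t, ?_, (hmem none).2⟩
  exact mem_iInter.2 fun w => hmem (some w)

lemma T2_bddBelow (x : M) : BddBelow (c.T2 x) :=
  bddBelow_Icc.mono ((c.T2_subset x).trans (c.T1_subset x))

lemma T2_bddAbove (x : M) : BddAbove (c.T2 x) :=
  bddAbove_Icc.mono ((c.T2_subset x).trans (c.T1_subset x))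

/-- the chosen midpoint parameter -/
noncomputable def mid (x : M) : ℝ := (sInf (c.T2 x) + sSup (c.T2 x)) / 2

lemma sInf_T2_mem (x : M) : sInf (c.T2 x) ∈ c.T2 x :=
  (c.T2_closed x).csInf_mem (c.T2_nonempty x) (c.T2_bddBelow x)

lemma sSup_T2_mem (x : M) : sSup (c.T2 x) ∈ c.T2 x :=
  (c.T2_closed x).csSup_mem (c.T2_nonempty x) (c.T2_bddAbove x)

lemma sInf_le_sSup_T2 (x : M) : sInf (c.T2 x) ≤ sSup (c.T2 x) := by
  obtain ⟨t, ht⟩ := c.T2_nonempty x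
  exact le_trans (csInf_le (c.T2_bddBelow x) ht) (le_csSup (c.T2_bddAbove x) ht)

lemma mid_mem (x : M) : c.mid x ∈ c.T2 x := by
  have h := c.sInf_le_sSup_T2 x
  refine ((c.T2_convex x).ordConnected).out (c.sInf_T2_mem x) (c.sSup_T2_mem x) ?_
  constructor
  · rw [Cfg.mid]; linarith
  · rw [Cfg.mid]; linarith

/-- the selection -/
noncomputable def f (x : M) : X := c.γ x (c.mid x)

lemma f_mem (x : M) : c.f x ∈ c.F x := by
  rw [c.F_eq x]
  exact ⟨c.mid x, (c.T2_subset x).trans (c.T1_subset x) (c.mid_mem x), rfl⟩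

lemma phi_f_eq (φ : X →L[ℝ] ℝ) (x : M) :
    φ (c.f x) = (φ (c.γ x (sInf (c.T2 x))) + φ (c.γ x (sSup (c.T2 x)))) / 2 := by
  have h : c.mid x = (1 - (1/2 : ℝ)) * sInf (c.T2 x) + (1/2) * sSup (c.T2 x) := by
    rw [Cfg.mid]; ring
  rw [Cfg.f, h, show c.γ x = sg (c.A x) (c.B x) from rfl, sg_comb, map_add, map_smul, map_smul]
  simp only [smul_eq_mul]
  ring

lemma phi_mem_uIcc (φ : X →L[ℝ] ℝ) (x : M) {s : ℝ} (hs : s ∈ c.T2 x) :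
    φ (c.γ x s) ∈ uIcc (φ (c.γ x (sInf (c.T2 x)))) (φ (c.γ x (sSup (c.T2 x)))) := by
  have h1 : s ∈ uIcc (sInf (c.T2 x)) (sSup (c.T2 x)) := by
    rw [uIcc_of_le (c.sInf_le_sSup_T2 x)]
    exact ⟨csInf_le (c.T2_bddBelow x) hs, le_csSup (c.T2_bddAbove x) hs⟩
  have := phi_sg_mem_uIcc φ (c.A x) (c.B x) h1
  rw [show sg (c.A x) (c.B x) = c.γ x from rfl] at this
  exact this

end Cfg
end LsegAux

open LsegAux in
private theorem stmt_19_aux {M : Type*} {X : Type*} [NormedAddCommGroup X] [NormedSpace ℝ X]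
    [CompleteSpace X]
    (ρ : M → M → ℝ)
    (hρself : ∀ x, ρ x x = 0) (hρsymm : ∀ x y, ρ x y = ρ y x)
    (hρtri : ∀ x y z, ρ x y ≤ ρ x z + ρ z y)
    (F : M → Set X) (hF : ∀ x, ∃ a b : X, F x = segment ℝ a b)
    (lam : ℝ) (hlam : 0 < lam)
    (hfin : ∀ M' : Finset M, M'.card ≤ 4 →
      ∃ f' : M → X, (∀ x ∈ M', f' x ∈ F x) ∧
        ∀ x ∈ M', ∀ y ∈ M', ‖f' x - f' y‖ ≤ lam * ρ x y) :
    ∃ f : M → X, (∀ x, f x ∈ F x) ∧ ∀ x y, ‖f x - f y‖ ≤ 15 * lam * ρ x y := by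
  classical
  choose A B hAB using hF
  let c : Cfg M X := ⟨ρ, lam, F, A, B, hlam, hρself, hρsymm, hρtri, hAB, hfin⟩
  refine ⟨c.f, fun x => c.f_mem x, fun x y => ?_⟩
  have hr0 : (0:ℝ) ≤ lam * ρ x y := c.r_nonneg x y
  set d := 15 * (lam * ρ x y) with hd
  by_cases heq : c.f x = c.f y
  · rw [heq, sub_self, norm_zero]
    nlinarith
  have hwalk1 : ∀ s ∈ c.T2 x, ∃ t ∈ c.T2 y, ‖c.γ y t - c.γ x s‖ ≤ d :=
    fun s hs => c.walk x y hs
  have hwalk2 : ∀ t ∈ c.T2 y, ∃ s ∈ c.T2 x, ‖c.γ x s - c.γ y t‖ ≤ d := by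
    intro t ht
    obtain ⟨s, hs, hb⟩ := c.walk y x ht
    refine ⟨s, hs, ?_⟩
    have hsymm : c.ρ y x = ρ x y := hρsymm y x
    calc ‖c.γ x s - c.γ y t‖ ≤ 15 * (c.lam * c.ρ y x) := hb
      _ = d := by rw [hsymm, hd]
  obtain ⟨φ, hφ1, hφ2⟩ := exists_dual_vector ℝ (c.f x - c.f y) (norm_ne_zero_iff.2 (sub_ne_zero.2 heq))
  set ax := φ (c.γ x (sInf (c.T2 x))) with hax
  set bx := φ (c.γ x (sSup (c.T2 x))) with hbx
  set ay := φ (c.γ y (sInf (c.T2 y))) with hay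
  set by' := φ (c.γ y (sSup (c.T2 y))) with hby
  have hfx : φ (c.f x) = (ax + bx) / 2 := c.phi_f_eq φ x
  have hfy : φ (c.f y) = (ay + by') / 2 := c.phi_f_eq φ y
  have hux : ∀ s ∈ c.T2 x, min ax bx ≤ φ (c.γ x s) ∧ φ (c.γ x s) ≤ max ax bx := by
    intro s hs
    have h := c.phi_mem_uIcc φ x hs
    rw [Set.mem_uIcc] at h
    rcases h with ⟨h1, h2⟩ | ⟨h1, h2⟩
    · exact ⟨min_le_iff.2 (Or.inl h1), le_max_iff.2 (Or.inr h2)⟩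
    · exact ⟨min_le_iff.2 (Or.inr h1), le_max_iff.2 (Or.inl h2)⟩
  have huy : ∀ t ∈ c.T2 y, min ay by' ≤ φ (c.γ y t) ∧ φ (c.γ y t) ≤ max ay by' := by
    intro t ht
    have h := c.phi_mem_uIcc φ y ht
    rw [Set.mem_uIcc] at h
    rcases h with ⟨h1, h2⟩ | ⟨h1, h2⟩
    · exact ⟨min_le_iff.2 (Or.inl h1), le_max_iff.2 (Or.inr h2)⟩
    · exact ⟨min_le_iff.2 (Or.inr h1), le_max_iff.2 (Or.inl h2)⟩
  have hφbound : ∀ z : X, φ z ≤ ‖z‖ := by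
    intro z
    have h := φ.le_opNorm z
    rw [hφ1, one_mul] at h
    exact le_trans (le_abs_self _) (by rwa [Real.norm_eq_abs] at h)
  -- the maximum bound
  have hMax : max ax bx ≤ max ay by' + d := by
    have key : ∀ s ∈ c.T2 x, φ (c.γ x s) ≤ max ay by' + d := by
      intro s hs
      obtain ⟨t, ht, hb⟩ := hwalk1 s hs
      have h1 : φ (c.γ x s) - φ (c.γ y t) ≤ d := by
        rw [← map_sub]
        refine le_trans (hφbound _) ?_
        rw [norm_sub_rev]
        exact hb
      have h2 := (huy t ht).2
      linarith
    rcases max_cases ax bx with ⟨hm, _⟩ | ⟨hm, _⟩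
    · rw [hm, hax]; exact key _ (c.sInf_T2_mem x)
    · rw [hm, hbx]; exact key _ (c.sSup_T2_mem x)
  -- the minimum bound
  have hMin : min ax bx ≤ min ay by' + d := by
    have key : ∀ t ∈ c.T2 y, min ax bx ≤ φ (c.γ y t) + d := by
      intro t ht
      obtain ⟨s, hs, hb⟩ := hwalk2 t ht
      have h1 : φ (c.γ x s) - φ (c.γ y t) ≤ d := by
        rw [← map_sub]
        exact le_trans (hφbound _) hb
      have h2 := (hux s hs).1
      linarith
    rcases min_cases ay by' with ⟨hm, _⟩ | ⟨hm, _⟩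
    · rw [hm, hay]; exact key _ (c.sInf_T2_mem y)
    · rw [hm, hby]; exact key _ (c.sSup_T2_mem y)
  have hnorm : ‖c.f x - c.f y‖ = φ (c.f x) - φ (c.f y) := by
    rw [← map_sub, hφ2]
    norm_cast
  rw [hnorm, hfx, hfy]
  have h1 : ax + bx = max ax bx + min ax bx := (max_add_min ax bx).symm
  have h2 : ay + by' = max ay by' + min ay by' := (max_add_min ay by').symm
  rw [h1, h2]
  have : d = 15 * lam * ρ x y := by rw [hd]; ring
  linarith


/-- **Theorem (LSEG-B), a finiteness principle for segment-valued mappings**: let `(M,ρ)` be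
a pseudometric space, `X` a Banach space, and `F : M → 𝒦₁(X)` a map into nonempty closed
bounded segments (possibly points) of `X`. If for every subset `M' ⊆ M` with at most `4`
points the restriction `F|_{M'}` has a selection which is `λ`-Lipschitz with respect to `ρ`,
then `F` has a selection which is `15λ`-Lipschitz on all of `M`. -/
theorem stmt_19 {M : Type*} {X : Type*} [NormedAddCommGroup X] [NormedSpace ℝ X]
    [CompleteSpace X]
    (ρ : M → M → ℝ)
    (hρself : ∀ x, ρ x x = 0) (hρsymm : ∀ x y, ρ x y = ρ y x)
    (hρtri : ∀ x y z, ρ x y ≤ ρ x z + ρ z y)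
    (F : M → Set X) (hF : ∀ x, ∃ a b : X, F x = segment ℝ a b)
    (lam : ℝ) (hlam : 0 < lam)
    (hfin : ∀ M' : Finset M, M'.card ≤ 4 →
      ∃ f' : M → X, (∀ x ∈ M', f' x ∈ F x) ∧
        ∀ x ∈ M', ∀ y ∈ M', ‖f' x - f' y‖ ≤ lam * ρ x y) :
    ∃ f : M → X, (∀ x, f x ∈ F x) ∧ ∀ x y, ‖f x - f y‖ ≤ 15 * lam * ρ x y :=
  stmt_19_aux ρ hρself hρsymm hρtri F hF lam hlam hfin
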